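/- For every integer m ≥ 2, the real function f_m(x) = (2 + (x^(2m))^(1/(m+1)))^((m+1)/(2m)) / sqrt(4 + x^2) attains its maximum over positive reals at x = 2^((m+1)/2). -/

import Mathlib

open Real

lemma holder2 {p q a₁ a₂ b₁ b₂ : ℝ} (hpq : p.HolderConjugate q)
    (ha₁ : 0 ≤ a₁) (ha₂ : 0 ≤ a₂) (hb₁ : 0 ≤ b₁) (hb₂ : 0 ≤ b₂) :
    a₁ * b₁ + a₂ * b₂ ≤ (a₁ ^ p + a₂ ^ p) ^ (1/p) * (b₁ ^ q + b₂ ^ q) ^ (1/q) := by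
  have h := Real.inner_le_Lp_mul_Lq_of_nonneg (Finset.univ : Finset (Fin 2))
    (f := ![a₁, a₂]) (g := ![b₁, b₂]) hpq
    (by intro i _; fin_cases i <;> simpa) (by intro i _; fin_cases i <;> simpa)
  simpa [Fin.sum_univ_two] using h

lemma key (m : ℕ) (hm : 1 ≤ m) (t : ℝ) (ht : 0 < t) :
    (2 + t) ^ ((m:ℝ)+1) ≤ (2 + 2 ^ (m:ℝ)) / 2 ^ (m:ℝ) * (4 + t ^ (((m:ℝ)+1)/m)) ^ (m:ℝ) := by
  have hm0 : (0:ℝ) < m := by exact_mod_cast Nat.pos_of_ne_zero (by omega)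
  have hm0' : (m:ℝ) ≠ 0 := ne_of_gt hm0
  set p : ℝ := (m:ℝ) + 1 with hp
  set q : ℝ := ((m:ℝ) + 1) / m with hq
  have hm1 : p ≠ 0 := by positivity
  have hpq : p.HolderConjugate q := by
    rw [Real.holderConjugate_iff]; constructor
    · simp only [hp]; linarith
    · rw [hp, hq]; field_simp; ring
  have hppos : (0:ℝ) < p := hpq.pos
  have h := holder2 (a₁ := (2:ℝ) ^ ((1-(m:ℝ))/p)) (a₂ := 1)
    (b₁ := (2:ℝ) ^ (2*(m:ℝ)/p)) (b₂ := t) hpq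
    (by positivity) zero_le_one (by positivity) ht.le
  have e1 : (2:ℝ) ^ ((1-(m:ℝ))/p) * (2:ℝ) ^ (2*(m:ℝ)/p) = 2 := by
    rw [← Real.rpow_add two_pos]
    have : (1-(m:ℝ))/p + 2*(m:ℝ)/p = 1 := by rw [hp]; field_simp; ring
    rw [this, Real.rpow_one]
  have e2 : ((2:ℝ) ^ ((1-(m:ℝ))/p)) ^ p = 2 ^ (1-(m:ℝ)) := by
    rw [← Real.rpow_mul (by norm_num : (0:ℝ) ≤ 2), div_mul_cancel₀ _ hm1]
  have e3 : ((2:ℝ) ^ (2*(m:ℝ)/p)) ^ q = 4 := by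
    rw [← Real.rpow_mul (by norm_num : (0:ℝ) ≤ 2)]
    have : 2*(m:ℝ)/p * q = 2 := by rw [hp, hq]; field_simp
    rw [this]; norm_num
  rw [e1, e2, e3, one_rpow, one_mul] at h
  -- h : 2 + t ≤ (2^(1-m) + 1)^(1/p) * (4 + t^q)^(1/q)
  have hXpos : (0:ℝ) < 2 ^ (1-(m:ℝ)) + 1 := by positivity
  have hYpos : (0:ℝ) < 4 + t ^ q := by positivity
  have h2 : (2 + t) ^ p ≤ ((2 ^ (1-(m:ℝ)) + 1) ^ (1/p) * (4 + t ^ q) ^ (1/q)) ^ p :=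
    Real.rpow_le_rpow (by positivity) h hppos.le
  have e4 : ((2 ^ (1-(m:ℝ)) + 1) ^ (1/p) * (4 + t ^ q) ^ (1/q)) ^ p
      = (2 ^ (1-(m:ℝ)) + 1) * (4 + t ^ q) ^ (m:ℝ) := by
    rw [Real.mul_rpow (by positivity) (by positivity),
      ← Real.rpow_mul hXpos.le, ← Real.rpow_mul hYpos.le,
      one_div_mul_cancel hm1, Real.rpow_one]
    congr 1
    rw [hp, hq]; field_simp
  rw [e4] at h2
  have e5 : (2:ℝ) ^ (1-(m:ℝ)) + 1 = (2 + 2 ^ (m:ℝ)) / 2 ^ (m:ℝ) := by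
    have h2m : (0:ℝ) < 2 ^ (m:ℝ) := by positivity
    rw [Real.rpow_sub two_pos, Real.rpow_one]
    field_simp
  rw [e5] at h2
  exact h2

theorem stmt_1 (m : ℕ) (hm : 2 ≤ m) :
    IsMaxOn
      (fun x : ℝ =>
        (2 + (x ^ (2 * (m:ℝ))) ^ (1 / ((m:ℝ) + 1))) ^ (((m:ℝ) + 1) / (2 * m)) /
          Real.sqrt (4 + x ^ 2))
      (Set.Ioi (0:ℝ)) ((2:ℝ) ^ (((m:ℝ) + 1) / 2)) := by
  have hm0 : (0:ℝ) < m := by exact_mod_cast Nat.pos_of_ne_zero (by omega)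
  have hm0' : (m:ℝ) ≠ 0 := ne_of_gt hm0
  have hm1 : ((m:ℝ) + 1) ≠ 0 := by positivity
  have h2m : (0:ℝ) < 2 * m := by positivity
  have hS : (0:ℝ) < 2 + 2 ^ (m:ℝ) := by positivity
  set C : ℝ := (2 + 2 ^ (m:ℝ)) ^ (1/(2*(m:ℝ))) / Real.sqrt 2 with hC
  -- value at the claimed maximizer
  have hval : (2 + (((2:ℝ) ^ (((m:ℝ)+1)/2)) ^ (2 * (m:ℝ))) ^ (1 / ((m:ℝ) + 1))) ^ (((m:ℝ) + 1) / (2 * m)) /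
      Real.sqrt (4 + ((2:ℝ) ^ (((m:ℝ)+1)/2)) ^ 2) = C := by
    have h1 : ((2:ℝ) ^ (((m:ℝ)+1)/2)) ^ (2 * (m:ℝ)) = 2 ^ ((m:ℝ)*((m:ℝ)+1)) := by
      rw [← Real.rpow_mul (by norm_num : (0:ℝ) ≤ 2)]; congr 1; ring
    have h2 : ((2:ℝ) ^ ((m:ℝ)*((m:ℝ)+1))) ^ (1/((m:ℝ)+1)) = 2 ^ (m:ℝ) := by
      rw [← Real.rpow_mul (by norm_num : (0:ℝ) ≤ 2)]; congr 1; field_simp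
    have h3 : ((2:ℝ) ^ (((m:ℝ)+1)/2)) ^ (2:ℕ) = 2 * 2 ^ (m:ℝ) := by
      rw [← Real.rpow_natCast ((2:ℝ) ^ (((m:ℝ)+1)/2)) 2,
        ← Real.rpow_mul (by norm_num : (0:ℝ) ≤ 2),
        show ((m:ℝ)+1)/2 * ((2:ℕ):ℝ) = 1 + (m:ℝ) by push_cast; ring,
        Real.rpow_add two_pos, Real.rpow_one]
    rw [h1, h2, h3, show (4:ℝ) + 2 * 2 ^ (m:ℝ) = 2 * (2 + 2 ^ (m:ℝ)) by ring,
      Real.sqrt_mul (by norm_num : (0:ℝ) ≤ 2), Real.sqrt_eq_rpow (2 + 2 ^ (m:ℝ)), hC,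
      div_eq_div_iff (by positivity) (by positivity),
      show ((m:ℝ)+1)/(2*m) = 1/(2*(m:ℝ)) + 1/2 by field_simp; ring,
      Real.rpow_add hS]
    ring
  rw [isMaxOn_iff]
  intro x hx
  simp only [Set.mem_Ioi] at hx
  rw [hval]
  -- now show f x ≤ C
  set t : ℝ := (x ^ (2 * (m:ℝ))) ^ (1 / ((m:ℝ) + 1)) with htdef
  have ht : 0 < t := by
    have : (0:ℝ) < x ^ (2 * (m:ℝ)) := Real.rpow_pos_of_pos hx _
    positivity
  have htx : t ^ (((m:ℝ)+1)/(m:ℝ)) = x ^ (2:ℕ) := by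
    rw [htdef, ← Real.rpow_mul (Real.rpow_nonneg hx.le _), ← Real.rpow_mul hx.le,
      show 2 * (m:ℝ) * (1 / ((m:ℝ) + 1) * (((m:ℝ)+1)/(m:ℝ))) = ((2:ℕ):ℝ) by field_simp; norm_num,
      Real.rpow_natCast]
  have hkey := key m (by omega) t ht
  rw [htx] at hkey
  have hxx : (0:ℝ) < 4 + x ^ 2 := by positivity
  rw [← Real.rpow_le_rpow_iff (by positivity) (by positivity) h2m,
    Real.div_rpow (by positivity) (Real.sqrt_nonneg _),
    Real.div_rpow (by positivity) (Real.sqrt_nonneg _),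
    ← Real.rpow_mul (by positivity : (0:ℝ) ≤ 2 + t),
    ← Real.rpow_mul hS.le,
    show ((m:ℝ)+1)/(2*m) * (2*m) = (m:ℝ)+1 by field_simp,
    show 1/(2*(m:ℝ)) * (2*m) = 1 by field_simp,
    Real.rpow_one,
    Real.sqrt_eq_rpow, Real.sqrt_eq_rpow,
    ← Real.rpow_mul hxx.le, ← Real.rpow_mul (by norm_num : (0:ℝ) ≤ 2),
    show 1/(2:ℝ) * (2*m) = (m:ℝ) by ring]
  rw [div_le_div_iff₀ (by positivity) (by positivity)]
  calc (2 + t) ^ ((m:ℝ)+1) * 2 ^ (m:ℝ)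
      ≤ ((2 + 2 ^ (m:ℝ)) / 2 ^ (m:ℝ) * (4 + x ^ 2) ^ (m:ℝ)) * 2 ^ (m:ℝ) := by
        have h2mp : (0:ℝ) < 2 ^ (m:ℝ) := by positivity
        exact mul_le_mul_of_nonneg_right hkey h2mp.le
    _ = (2 + 2 ^ (m:ℝ)) * (4 + x ^ 2) ^ (m:ℝ) := by
        have h2mp : (2:ℝ) ^ (m:ℝ) ≠ 0 := by positivity
        field_simp
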